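/- arXiv:2412.11726 — 2 statements merged into one kernel-verified Lean document; each statement's English description precedes it below -/
import Mathlib

section
/- ∫_0^{π/4} ln(cos x) dx = (G/2) − (π/4)·ln 2, where G is the Catalan constant G = Σ_{r=0}^∞ (−1)^r/(2r+1)^2. -/
open Real intervalIntegral
open MeasureTheory Set

lemma lem_log_int {b : ℝ} (hb1 : b ≤ 1) :
    IntegrableOn Real.log (Set.Ioc 0 b) := by
  have h : IntegrableOn (fun x => -Real.log x) (Set.Ioc 0 b) := by
    apply integrableOn_deriv_of_nonneg (g := fun x => x - x * Real.log x)
    · exact (continuous_id.sub Real.continuous_mul_log).continuousOn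
    · intro x hx
      have h1 : HasDerivAt (fun x : ℝ => x * Real.log x) (Real.log x + 1) x := by
        simpa [mul_inv_cancel₀ hx.1.ne'] using (hasDerivAt_id x).fun_mul (Real.hasDerivAt_log hx.1.ne')
      simpa using (hasDerivAt_id x).fun_sub h1
    · intro x hx
      simp only [neg_nonneg]
      exact Real.log_nonpos hx.1.le (hx.2.le.trans hb1)
  exact integrable_neg_iff.mp h

lemma lem_log_int' (b : ℝ) : IntegrableOn Real.log (Set.Ioc 0 b) := by
  rcases le_or_gt b 1 with h | h
  · exact lem_log_int h
  · have := (lem_log_int le_rfl).union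
      ((Real.continuousOn_log.mono (by intro x hx; simp; linarith [hx.1])).integrableOn_compact
        (isCompact_Icc (a := (1:ℝ)) (b := b)))
    apply this.mono_set
    intro x hx
    rcases le_or_gt x 1 with h2 | h2
    · exact Or.inl ⟨hx.1, h2⟩
    · exact Or.inr ⟨h2.le, hx.2⟩

lemma lem_logsin_int : IntegrableOn (fun x => Real.log (Real.sin x)) (Set.Ioc 0 (π/2)) := by
  have hmaj : IntegrableOn (fun x => -Real.log x + Real.log (π/2)) (Set.Ioc 0 (π/2)) :=
    (lem_log_int' (π/2)).neg.add (integrableOn_const (by simp))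
  apply Integrable.mono' hmaj
    ((Real.measurable_log.comp Real.continuous_sin.measurable).aestronglyMeasurable)
  rw [ae_restrict_iff' measurableSet_Ioc]
  filter_upwards with x hx
  have hx0 : 0 < x := hx.1
  have hs0 : 0 < Real.sin x := Real.sin_pos_of_pos_of_lt_pi hx0 (by linarith [Real.pi_pos, hx.2])
  have h1 : Real.sin x ≤ 1 := Real.sin_le_one x
  have h2 : 2/π * x ≤ Real.sin x := Real.mul_le_sin hx0.le hx.2
  have hlow : Real.log x - Real.log (π/2) ≤ Real.log (Real.sin x) := by
    have : Real.log (2/π * x) ≤ Real.log (Real.sin x) :=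
      Real.log_le_log (by positivity) h2
    rw [Real.log_mul (by positivity) hx0.ne', Real.log_div (by norm_num) Real.pi_pos.ne'] at this
    rw [Real.log_div Real.pi_pos.ne' (by norm_num)]
    linarith
  have hup : Real.log (Real.sin x) ≤ 0 := Real.log_nonpos hs0.le h1
  rw [Real.norm_eq_abs]
  simp only [Function.comp_apply]
  rw [abs_of_nonpos hup]
  linarith

lemma II_logsin {a b : ℝ} (ha : 0 ≤ a) (hb : b ≤ π/2) (hab : a ≤ b) :
    IntervalIntegrable (fun x => Real.log (Real.sin x)) volume a b := by
  have h : IntervalIntegrable (fun x => Real.log (Real.sin x)) volume 0 (π/2) := by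
    rw [intervalIntegrable_iff_integrableOn_Ioc_of_le (by positivity)]
    exact lem_logsin_int
  apply h.mono_set
  rw [Set.uIcc_of_le hab, Set.uIcc_of_le (by positivity : (0:ℝ) ≤ π/2)]
  exact Set.Icc_subset_Icc ha hb

lemma II_logcos : IntervalIntegrable (fun x => Real.log (Real.cos x)) volume 0 (π/4) := by
  apply ContinuousOn.intervalIntegrable
  apply ContinuousOn.log Real.continuous_cos.continuousOn
  intro x hx
  rw [Set.uIcc_of_le (by positivity)] at hx
  have : 0 < Real.cos x := Real.cos_pos_of_mem_Ioo
    ⟨by linarith [hx.1, Real.pi_pos], by linarith [hx.2, Real.pi_pos]⟩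
  exact this.ne'

lemma lem_T_eq : (∫ x in (0:ℝ)..(π/4), Real.log (Real.cos x)) =
    ∫ x in (π/4 : ℝ)..(π/2), Real.log (Real.sin x) := by
  have := intervalIntegral.integral_comp_sub_left
    (a := (0:ℝ)) (b := π/4) (fun x => Real.log (Real.sin x)) (π/2)
  simp only [Real.sin_pi_div_two_sub] at this
  rw [this, show π/2 - π/4 = π/4 by ring, show π/2 - (0:ℝ) = π/2 by ring]

lemma lem_I : (∫ x in (0:ℝ)..(π/2), Real.log (Real.sin x)) = -(π/2) * Real.log 2 := by
  have pi4 : (0:ℝ) ≤ π/4 := by positivity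
  have h1 : IntervalIntegrable (fun x => Real.log (Real.sin x)) volume 0 (π/4) :=
    II_logsin le_rfl (by linarith [Real.pi_pos]) pi4
  have h2 : IntervalIntegrable (fun x => Real.log (Real.sin x)) volume (π/4) (π/2) :=
    II_logsin pi4 le_rfl (by linarith [Real.pi_pos])
  have hsplit : (∫ x in (0:ℝ)..(π/4), Real.log (Real.sin x)) +
      (∫ x in (π/4:ℝ)..(π/2), Real.log (Real.sin x)) =
      ∫ x in (0:ℝ)..(π/2), Real.log (Real.sin x) :=
    intervalIntegral.integral_add_adjacent_intervals h1 h2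
  have hscale : (∫ x in (0:ℝ)..(π/4), Real.log (Real.sin (2*x))) =
      (1/2) * ∫ x in (0:ℝ)..(π/2), Real.log (Real.sin x) := by
    have h := intervalIntegral.integral_comp_mul_left
      (a := (0:ℝ)) (b := π/4) (fun x => Real.log (Real.sin x)) (two_ne_zero (α := ℝ))
    rw [show (2:ℝ) * (π/4) = π/2 by ring, show (2:ℝ) * 0 = 0 by ring] at h
    rw [h, smul_eq_mul]
    norm_num
  have hcongr : (∫ x in (0:ℝ)..(π/4), Real.log (Real.sin (2*x))) =
      ∫ x in (0:ℝ)..(π/4), (Real.log 2 + Real.log (Real.sin x) + Real.log (Real.cos x)) := by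
    apply intervalIntegral.integral_congr_ae
    filter_upwards with x hx
    rw [Set.uIoc_of_le pi4] at hx
    have hs : 0 < Real.sin x := Real.sin_pos_of_pos_of_lt_pi hx.1
      (by linarith [hx.2, Real.pi_pos])
    have hc : 0 < Real.cos x := Real.cos_pos_of_mem_Ioo
      ⟨by linarith [hx.1, Real.pi_pos], by linarith [hx.2, Real.pi_pos]⟩
    rw [Real.sin_two_mul, Real.log_mul (by positivity) hc.ne',
      Real.log_mul (by norm_num) hs.ne']
  have hadd : (∫ x in (0:ℝ)..(π/4), (Real.log 2 + Real.log (Real.sin x) + Real.log (Real.cos x)))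
      = (π/4) * Real.log 2 + (∫ x in (0:ℝ)..(π/4), Real.log (Real.sin x)) +
        (∫ x in (0:ℝ)..(π/4), Real.log (Real.cos x)) := by
    rw [intervalIntegral.integral_add ((_root_.intervalIntegrable_const (c := Real.log 2)).add h1) II_logcos,
      intervalIntegral.integral_add (_root_.intervalIntegrable_const (c := Real.log 2)) h1]
    simp [mul_comm]
  have hTA : (∫ x in (0:ℝ)..(π/4), Real.log (Real.sin x)) +
      (∫ x in (0:ℝ)..(π/4), Real.log (Real.cos x)) =
      ∫ x in (0:ℝ)..(π/2), Real.log (Real.sin x) := by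
    rw [lem_T_eq]; exact hsplit
  have hfin := hscale.symm.trans (hcongr.trans hadd)
  set I := ∫ x in (0:ℝ)..(π/2), Real.log (Real.sin x)
  linarith [hfin, hTA]

lemma int_pow_log (k : ℕ) :
    IntegrableOn (fun t => t^k * Real.log t) (Set.Ioc (0:ℝ) 1) := by
  apply Integrable.mono' (lem_log_int le_rfl).neg
    (((continuous_pow k).measurable.mul Real.measurable_log).aestronglyMeasurable)
  rw [ae_restrict_iff' measurableSet_Ioc]
  filter_upwards with t ht
  have h1 : 0 < t := ht.1
  have h2 : t ≤ 1 := ht.2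
  have hp : t^k ≤ 1 := pow_le_one₀ h1.le h2
  have hlog : Real.log t ≤ 0 := Real.log_nonpos h1.le h2
  simp only [Pi.mul_apply]
  rw [Real.norm_eq_abs, abs_mul, abs_of_nonneg (by positivity : (0:ℝ) ≤ t^k),
    abs_of_nonpos hlog]
  simp only [Pi.neg_apply]
  exact mul_le_of_le_one_left (neg_nonneg.2 hlog) hp

lemma lem_pow_log (k : ℕ) :
    ∫ t in (0:ℝ)..1, t^k * Real.log t = -(1/((k:ℝ)+1)^2) := by
  have hk : ((k:ℝ)+1) ≠ 0 := by positivity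
  set F : ℝ → ℝ := fun t => (t^(k+1) * Real.log t) / ((k:ℝ)+1) - t^(k+1)/((k:ℝ)+1)^2 with hF
  have hc : Continuous (fun t:ℝ => t^(k+1) * Real.log t) := by
    have : (fun t:ℝ => t^(k+1) * Real.log t) = fun t => t^k * (t * Real.log t) := by
      funext t
      rw [pow_succ]
      ring
    rw [this]
    exact (continuous_pow k).mul Real.continuous_mul_log
  have hFc : ContinuousOn F (Set.uIcc (0:ℝ) 1) :=
    ((hc.div_const _).sub ((continuous_pow (k+1)).div_const _)).continuousOn
  have hder : ∀ x ∈ Set.Ioo (min (0:ℝ) 1) (max (0:ℝ) 1),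
      HasDerivWithinAt F (x^k * Real.log x) (Set.Ioi x) x := by
    intro x hx
    rw [min_def, max_def] at hx
    norm_num at hx
    have hx0 : x ≠ 0 := hx.1.ne'
    have h1 : HasDerivAt (fun t:ℝ => t^(k+1) * Real.log t)
        (((k:ℝ)+1) * x^k * Real.log x + x^k) x := by
      have := (hasDerivAt_pow (k+1) x).fun_mul (Real.hasDerivAt_log hx0)
      refine this.congr_deriv ?_
      rw [Nat.add_sub_cancel, pow_succ, mul_assoc (x^k) x, mul_inv_cancel₀ hx0]; push_cast
      ring
    have h2 : HasDerivAt F (x^k * Real.log x) x := by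
      have := (h1.div_const ((k:ℝ)+1)).fun_sub ((hasDerivAt_pow (k+1) x).div_const (((k:ℝ)+1)^2))
      refine this.congr_deriv ?_
      rw [Nat.add_sub_cancel]; push_cast; field_simp
      ring
    exact h2.hasDerivWithinAt
  have hint : IntervalIntegrable (fun t => t^k * Real.log t) volume 0 1 := by
    rw [intervalIntegrable_iff_integrableOn_Ioc_of_le zero_le_one]
    exact int_pow_log k
  rw [intervalIntegral.integral_eq_sub_of_hasDeriv_right hFc hder hint]
  simp [hF]

/-- The Catalan constant. -/
noncomputable def catalanConst : ℝ := ∑' r : ℕ, (-1 : ℝ) ^ r / (2 * (r : ℝ) + 1) ^ 2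

lemma summable_cat : Summable (fun n : ℕ => 1/((2*(n:ℝ)+1)^2)) := by
  have hbase : Summable (fun n : ℕ => 1/((n:ℝ)+1)^2) := by
    have := (summable_nat_add_iff (f := fun n : ℕ => 1/(n:ℝ)^2) 1).mpr
      (summable_one_div_nat_pow.mpr one_lt_two)
    apply this.congr
    intro n
    push_cast
    ring
  apply Summable.of_nonneg_of_le (fun n => by positivity) (fun n => ?_) hbase
  apply one_div_le_one_div_of_le (by positivity)
  have : (0:ℝ) ≤ (n:ℝ) := n.cast_nonneg
  nlinarith

lemma lem_cat_int : ∫ t in (0:ℝ)..1, Real.log t / (1 + t^2) = -catalanConst := by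
  set F : ℕ → ℝ → ℝ := fun n t => (-1:ℝ)^n * (t^(2*n) * Real.log t) with hFdef
  have hFint : ∀ n : ℕ, Integrable (F n) (volume.restrict (Set.Ioc (0:ℝ) 1)) := by
    intro n
    exact ((int_pow_log (2*n)).const_mul _)
  have hnorm : ∀ n : ℕ, ∫ t in Set.Ioc (0:ℝ) 1, ‖F n t‖ = 1/((2*(n:ℝ)+1)^2) := by
    intro n
    have h1 : ∫ t in Set.Ioc (0:ℝ) 1, ‖F n t‖ =
        ∫ t in Set.Ioc (0:ℝ) 1, -(t^(2*n) * Real.log t) := by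
      apply MeasureTheory.setIntegral_congr_fun measurableSet_Ioc
      intro t ht
      have h1 : 0 < t := ht.1
      have hlog : Real.log t ≤ 0 := Real.log_nonpos h1.le ht.2
      simp only [hFdef, Real.norm_eq_abs, abs_mul, abs_pow, abs_neg, abs_one, one_pow, one_mul,
        abs_of_nonneg (by positivity : (0:ℝ) ≤ t^(2*n)), abs_of_nonpos hlog]
      ring
    rw [h1, ← intervalIntegral.integral_of_le zero_le_one, intervalIntegral.integral_neg,
      lem_pow_log (2*n)]
    push_cast
    ring
  have hsum : Summable (fun n : ℕ => ∫ t in Set.Ioc (0:ℝ) 1, ‖F n t‖) := by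
    rw [funext hnorm]
    exact summable_cat
  have hswap := MeasureTheory.integral_tsum_of_summable_integral_norm hFint hsum
  have htsum : ∀ t ∈ Set.Ioc (0:ℝ) 1, (∑' n, F n t) = Real.log t / (1 + t^2) := by
    intro t ht
    rcases eq_or_lt_of_le ht.2 with h1 | h1
    · simp [hFdef, h1]
    · have hlt : ‖-t^2‖ < 1 := by
        rw [norm_neg, Real.norm_eq_abs, abs_of_nonneg (by positivity)]
        nlinarith [ht.1]
      have hgeo : ∑' n : ℕ, (-t^2)^n = (1 - (-t^2))⁻¹ := tsum_geometric_of_norm_lt_one hlt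
      have heq : ∀ n : ℕ, F n t = (-t^2)^n * Real.log t := by
        intro n
        rw [hFdef]
        simp only [neg_pow (t^2) n, ← pow_mul]
        ring
      rw [funext (fun n => heq n), tsum_mul_right, hgeo]
      rw [sub_neg_eq_add]
      ring
  have hright : ∫ t in Set.Ioc (0:ℝ) 1, (∑' n, F n t) =
      ∫ t in Set.Ioc (0:ℝ) 1, Real.log t / (1 + t^2) :=
    MeasureTheory.setIntegral_congr_fun measurableSet_Ioc htsum
  have hleft : ∀ n : ℕ, ∫ t in Set.Ioc (0:ℝ) 1, F n t =
      -((-1:ℝ)^n / (2*(n:ℝ)+1)^2) := by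
    intro n
    rw [← intervalIntegral.integral_of_le zero_le_one, hFdef]
    simp only
    rw [intervalIntegral.integral_const_mul, lem_pow_log (2*n)]
    push_cast
    ring
  rw [intervalIntegral.integral_of_le zero_le_one, ← hright, ← hswap, funext hleft,
    tsum_neg]
  rw [catalanConst]

lemma g_integrable : IntegrableOn (fun t => Real.log t / (1 + t^2)) (Set.Icc (0:ℝ) 1) := by
  rw [integrableOn_Icc_iff_integrableOn_Ioc]
  apply Integrable.mono' (lem_log_int le_rfl).neg
    ((Real.measurable_log.div ((measurable_const.add ((continuous_pow 2).measurable)))).aestronglyMeasurable)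
  rw [ae_restrict_iff' measurableSet_Ioc]
  filter_upwards with t ht
  have h1 : 0 < t := ht.1
  have hlog : Real.log t ≤ 0 := Real.log_nonpos h1.le ht.2
  have hd : (1:ℝ) ≤ 1 + t^2 := by nlinarith
  simp only [Pi.div_apply, Pi.add_apply]
  rw [Real.norm_eq_abs, abs_div, abs_of_nonpos hlog, abs_of_pos (by positivity : (0:ℝ) < 1 + t^2),
    Pi.neg_apply]
  rw [div_le_iff₀ (by positivity)]
  nlinarith [neg_nonneg.mpr hlog]

lemma lem_tan_sub : (∫ x in (0:ℝ)..(π/4), Real.log (Real.tan x)) =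
    ∫ t in (0:ℝ)..1, Real.log t / (1 + t^2) := by
  have pi4pos : (0:ℝ) < π/4 := by positivity
  have hcos : ∀ x ∈ Set.Icc (0:ℝ) (π/4), 0 < Real.cos x := by
    intro x hx
    exact Real.cos_pos_of_mem_Ioo
      ⟨by linarith [hx.1, Real.pi_pos], by linarith [hx.2, Real.pi_pos]⟩
  have huIcc : Set.uIcc (0:ℝ) (π/4) = Set.Icc 0 (π/4) := Set.uIcc_of_le pi4pos.le
  set g : ℝ → ℝ := fun t => Real.log t / (1 + t^2) with hg
  have key := intervalIntegral.integral_comp_smul_deriv''' (a := (0:ℝ)) (b := π/4)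
    (f := Real.tan) (f' := fun x => 1 / Real.cos x ^ 2) (g := g)
    (by -- ContinuousOn tan uIcc
      apply Real.continuousOn_tan.mono
      rw [huIcc]
      intro x hx
      exact (hcos x hx).ne')
    (by -- HasDerivWithinAt
      intro x hx
      rw [min_def, max_def] at hx
      simp only [if_pos pi4pos.le] at hx
      have := Real.hasDerivAt_tan (hcos x ⟨hx.1.le, hx.2.le⟩).ne'
      exact this.hasDerivWithinAt)
    (by -- ContinuousOn g on image of Ioo
      have hsub : Real.tan '' Set.Ioo (min (0:ℝ) (π/4)) (max (0:ℝ) (π/4)) ⊆ Set.Ioi 0 := by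
        rintro - ⟨x, hx, rfl⟩
        rw [min_def, max_def] at hx
        simp only [if_pos pi4pos.le] at hx
        exact Real.tan_pos_of_pos_of_lt_pi_div_two hx.1 (by linarith [hx.2, Real.pi_pos])
      apply ContinuousOn.mono _ hsub
      apply ContinuousOn.div (Real.continuousOn_log.mono (fun x hx => (ne_of_gt hx)))
        (continuous_const.add (continuous_pow 2)).continuousOn
      intro x _
      simp only [Pi.add_apply]
      positivity)
    (by -- IntegrableOn g on image of uIcc
      apply g_integrable.mono_set
      rw [huIcc]
      rintro - ⟨x, hx, rfl⟩
      constructor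
      · rw [← Real.tan_zero]
        apply Real.strictMonoOn_tan.monotoneOn ⟨by linarith [Real.pi_pos], by linarith [Real.pi_pos]⟩
          ⟨by linarith [hx.1, Real.pi_pos], by linarith [hx.2, Real.pi_pos]⟩ hx.1
      · rw [← Real.tan_pi_div_four]
        apply Real.strictMonoOn_tan.monotoneOn
          ⟨by linarith [hx.1, Real.pi_pos], by linarith [hx.2, Real.pi_pos]⟩
          ⟨by linarith [Real.pi_pos], by linarith [Real.pi_pos]⟩ hx.2)
    (by -- IntegrableOn integrand on uIcc
      rw [huIcc]
      have hII : IntervalIntegrable (fun x => Real.log (Real.sin x) - Real.log (Real.cos x))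
          volume 0 (π/4) :=
        (II_logsin le_rfl (by linarith [Real.pi_pos]) pi4pos.le).sub II_logcos
      rw [intervalIntegrable_iff_integrableOn_Icc_of_le pi4pos.le] at hII
      apply hII.congr_fun _ measurableSet_Icc
      intro x hx
      have hc := hcos x hx
      rcases eq_or_lt_of_le hx.1 with h0 | h0
      · simp [← h0, hg, Real.tan_zero]
      · have hs : 0 < Real.sin x := Real.sin_pos_of_pos_of_lt_pi h0
          (by linarith [hx.2, Real.pi_pos])
        have ht : 0 < Real.tan x := Real.tan_pos_of_pos_of_lt_pi_div_two h0
          (by linarith [hx.2, Real.pi_pos])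
        have htan : 1 + Real.tan x ^ 2 = 1 / Real.cos x ^ 2 := by
          rw [one_div, ← Real.inv_one_add_tan_sq hc.ne', inv_inv]
        have hkey : (1:ℝ) / Real.cos x ^ 2 * (Real.log (Real.tan x) / (1 / Real.cos x ^ 2)) =
            Real.log (Real.tan x) := by
          field_simp
        simp only [smul_eq_mul, Function.comp_apply, hg, htan]
        rw [hkey, Real.tan_eq_sin_div_cos, Real.log_div hs.ne' hc.ne'])
  rw [Real.tan_zero, Real.tan_pi_div_four] at key
  rw [← key]
  apply intervalIntegral.integral_congr
  intro x hx
  rw [huIcc] at hx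
  have hc := hcos x hx
  rcases eq_or_lt_of_le hx.1 with h0 | h0
  · simp [← h0, hg, Real.tan_zero]
  · have hs : 0 < Real.sin x := Real.sin_pos_of_pos_of_lt_pi h0
      (by linarith [hx.2, Real.pi_pos])
    have ht : 0 < Real.tan x := Real.tan_pos_of_pos_of_lt_pi_div_two h0
      (by linarith [hx.2, Real.pi_pos])
    have htan : 1 + Real.tan x ^ 2 = 1 / Real.cos x ^ 2 := by
      rw [one_div, ← Real.inv_one_add_tan_sq hc.ne', inv_inv]
    have hkey : (1:ℝ) / Real.cos x ^ 2 * (Real.log (Real.tan x) / (1 / Real.cos x ^ 2)) =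
        Real.log (Real.tan x) := by
      field_simp
    simp only [smul_eq_mul, Function.comp_apply, hg, htan]
    rw [hkey]

theorem stmt2 :
    (∫ x in (0:ℝ)..(π/4), Real.log (Real.cos x)) =
      catalanConst / 2 - (π / 4) * Real.log 2 := by
  have pi4pos : (0:ℝ) < π/4 := by positivity
  have h1 : IntervalIntegrable (fun x => Real.log (Real.sin x)) volume 0 (π/4) :=
    II_logsin le_rfl (by linarith [Real.pi_pos]) pi4pos.le
  have h2 : IntervalIntegrable (fun x => Real.log (Real.sin x)) volume (π/4) (π/2) :=
    II_logsin pi4pos.le le_rfl (by linarith [Real.pi_pos])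
  have hsplit := intervalIntegral.integral_add_adjacent_intervals h1 h2
  have hTA : (∫ x in (0:ℝ)..(π/4), Real.log (Real.sin x)) +
      (∫ x in (0:ℝ)..(π/4), Real.log (Real.cos x)) = -(π/2) * Real.log 2 := by
    rw [lem_T_eq, hsplit, lem_I]
  have hdiff : (∫ x in (0:ℝ)..(π/4), Real.log (Real.tan x)) =
      (∫ x in (0:ℝ)..(π/4), Real.log (Real.sin x)) -
      (∫ x in (0:ℝ)..(π/4), Real.log (Real.cos x)) := by
    rw [← intervalIntegral.integral_sub h1 II_logcos]
    apply intervalIntegral.integral_congr_ae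
    filter_upwards with x hx
    rw [Set.uIoc_of_le pi4pos.le] at hx
    have hs : 0 < Real.sin x := Real.sin_pos_of_pos_of_lt_pi hx.1
      (by linarith [hx.2, Real.pi_pos])
    have hc : 0 < Real.cos x := Real.cos_pos_of_mem_Ioo
      ⟨by linarith [hx.1, Real.pi_pos], by linarith [hx.2, Real.pi_pos]⟩
    rw [Real.tan_eq_sin_div_cos, Real.log_div hs.ne' hc.ne']
  have hG : (∫ x in (0:ℝ)..(π/4), Real.log (Real.tan x)) = -catalanConst := by
    rw [lem_tan_sub, lem_cat_int]
  linarith [hTA, hdiff, hG]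
end

section
/- ∫_0^{π/4} x·tan x dx = (π/8)·ln 2 − (π/4)·ln 2 + G/2, where G is the Catalan constant. -/
open Real intervalIntegral

open MeasureTheory Set


/-- Antiderivative used for `∫ t^n (-log t)`. -/
noncomputable def Fa (n : ℕ) (t : ℝ) : ℝ :=
  t ^ (n+1) / ((n:ℝ)+1)^2 - t ^ n * (t * Real.log t) / ((n:ℝ)+1)

lemma Fa_cont (n : ℕ) : Continuous (Fa n) := by
  unfold Fa
  fun_prop (disch := positivity)

lemma Fa_deriv (n : ℕ) {t : ℝ} (ht : 0 < t) :
    HasDerivAt (Fa n) (t ^ n * (-Real.log t)) t := by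
  have h1 : HasDerivAt (fun t : ℝ => t ^ (n+1)) (((n:ℝ)+1) * t ^ n) t := by
    simpa using hasDerivAt_pow (n+1) t
  have hlog : HasDerivAt Real.log t⁻¹ t := Real.hasDerivAt_log ht.ne'
  have h2 : HasDerivAt (fun t : ℝ => t ^ (n+1) * Real.log t)
      (((n:ℝ)+1) * t ^ n * Real.log t + t ^ n) t := by
    have : HasDerivAt (fun t : ℝ => t ^ (n+1) * Real.log t)
        (((n:ℝ)+1) * t ^ n * Real.log t + t ^ (n+1) * t⁻¹) t := h1.mul hlog
    convert this using 1
    field_simp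
    ring
  have h3 : HasDerivAt (Fa n)
      ((((n:ℝ)+1) * t ^ n) / (((n:ℝ)+1)^2) -
        (((n:ℝ)+1) * t ^ n * Real.log t + t ^ n) / ((n:ℝ)+1)) t := by
    have e : Fa n = fun t : ℝ => t ^ (n+1) / ((n:ℝ)+1)^2 - t ^ (n+1) * Real.log t / ((n:ℝ)+1) := by
      funext t; unfold Fa; ring
    rw [e]
    exact (h1.div_const _).sub (h2.div_const _)
  convert h3 using 1
  have hn : ((n:ℝ)+1) ≠ 0 := by positivity
  field_simp
  ring

lemma intervalIntegrable_pow_neg_log (n : ℕ) :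
    IntervalIntegrable (fun t : ℝ => t ^ n * (-Real.log t)) volume 0 1 := by
  have h := integrableOn_deriv_of_nonneg ((Fa_cont n).continuousOn (s := Icc 0 1))
    (fun x hx => Fa_deriv n hx.1) ?_
  · rw [intervalIntegrable_iff, uIoc_of_le (by norm_num : (0:ℝ) ≤ 1)]
    exact h
  · intro x hx
    have h1 : Real.log x ≤ 0 := Real.log_nonpos hx.1.le hx.2.le
    exact mul_nonneg (pow_nonneg hx.1.le n) (neg_nonneg.2 h1)

lemma integral_pow_neg_log (n : ℕ) :
    ∫ t in (0:ℝ)..1, t ^ n * (-Real.log t) = 1 / ((n:ℝ)+1)^2 := by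
  rw [integral_eq_sub_of_hasDeriv_right_of_le (by norm_num)
      ((Fa_cont n).continuousOn)
      (fun x hx => (Fa_deriv n hx.1).hasDerivWithinAt)
      (intervalIntegrable_pow_neg_log n)]
  unfold Fa
  simp


lemma sq_summable : Summable (fun k : ℕ => 1/((k:ℝ)+1)^2) := by
  have h : Summable (fun n : ℕ => 1/(n:ℝ)^2) :=
    Real.summable_one_div_nat_pow.mpr (by norm_num)
  have := (summable_nat_add_iff 1).mpr h
  refine this.congr fun n => ?_
  push_cast; ring

lemma summable_aux (c d : ℝ) (hc : 1 ≤ c) (hd : 0 ≤ d) :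
    Summable (fun k : ℕ => 1/(c*(k:ℝ)+(1+d))^2) := by
  refine Summable.of_nonneg_of_le (fun k => by positivity) (fun k => ?_) sq_summable
  have h1 : (k:ℝ)+1 ≤ c*(k:ℝ)+(1+d) := by nlinarith [Nat.cast_nonneg (α := ℝ) k]
  gcongr

lemma catalan_eq : catalanConst = ∑' k : ℕ, (1/(4*(k:ℝ)+1)^2 - 1/(4*(k:ℝ)+3)^2) := by
  have ha : Summable (fun k : ℕ => 1/(4*(k:ℝ)+1)^2) := by
    simpa using summable_aux 4 0 (by norm_num) le_rfl
  have hb : Summable (fun k : ℕ => 1/(4*(k:ℝ)+3)^2) := by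
    simpa [show (1:ℝ)+2 = 3 by norm_num] using summable_aux 4 2 (by norm_num) (by norm_num)
  have he : (fun k : ℕ => ((-1:ℝ)) ^ (2*k) / (2*((2*k : ℕ):ℝ)+1)^2)
      = fun k : ℕ => 1/(4*(k:ℝ)+1)^2 := by
    funext k; rw [pow_mul]; push_cast; ring_nf
  have ho : (fun k : ℕ => ((-1:ℝ)) ^ (2*k+1) / (2*((2*k+1 : ℕ):ℝ)+1)^2)
      = fun k : ℕ => -(1/(4*(k:ℝ)+3)^2) := by
    funext k; rw [pow_succ, pow_mul]; push_cast; ring_nf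
  have key := tsum_even_add_odd (f := fun r : ℕ => ((-1:ℝ))^r / (2*(r:ℝ)+1)^2)
    (by rw [show (fun k : ℕ => ((-1:ℝ))^(2*k) / (2*((2*k:ℕ):ℝ)+1)^2)
          = fun k : ℕ => 1/(4*(k:ℝ)+1)^2 from he]; exact ha)
    (by rw [show (fun k : ℕ => ((-1:ℝ))^(2*k+1) / (2*((2*k+1:ℕ):ℝ)+1)^2)
          = fun k : ℕ => -(1/(4*(k:ℝ)+3)^2) from ho]; exact hb.neg)
  rw [catalanConst, ← key, he, ho, tsum_neg, ha.tsum_sub hb, sub_eq_add_neg]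

lemma intervalIntegrable_K :
    IntervalIntegrable (fun t : ℝ => (-Real.log t)/(1+t^2)) volume 0 1 := by
  have h0 := intervalIntegrable_pow_neg_log 0
  simp only [pow_zero, one_mul] at h0
  rw [intervalIntegrable_iff, uIoc_of_le (by norm_num : (0:ℝ) ≤ 1)] at h0 ⊢
  refine Integrable.mono' h0 ?_ ?_
  · exact ((Real.measurable_log.neg.div
      ((measurable_id.pow_const 2).const_add 1)).aestronglyMeasurable)
  · filter_upwards [ae_restrict_mem measurableSet_Ioc] with t ht
    have h1 : Real.log t ≤ 0 := Real.log_nonpos ht.1.le ht.2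
    have h2 : (1:ℝ) ≤ 1 + t^2 := by nlinarith
    rw [Real.norm_eq_abs, abs_div, abs_of_nonneg (by linarith), abs_of_nonneg (by linarith)]
    calc -Real.log t / (1+t^2) ≤ -Real.log t / 1 := by
          apply div_le_div_of_nonneg_left (by linarith) (by norm_num) h2
      _ = -Real.log t := by ring

lemma K_eq : ∫ t in (0:ℝ)..1, (-Real.log t)/(1+t^2) = catalanConst := by
  set F : ℕ → ℝ → ℝ := fun k t => t^(4*k) * (-Real.log t) - t^(4*k+2) * (-Real.log t) with hF
  set μ := volume.restrict (Ioc (0:ℝ) 1) with hμ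
  have hkint : ∀ k : ℕ, IntervalIntegrable (F k) volume 0 1 := fun k =>
    (intervalIntegrable_pow_neg_log (4*k)).sub (intervalIntegrable_pow_neg_log (4*k+2))
  have hint : ∀ k : ℕ, Integrable (F k) μ := by
    intro k
    have := (hkint k)
    rwa [intervalIntegrable_iff, uIoc_of_le (by norm_num : (0:ℝ) ≤ 1)] at this
  have hval : ∀ k : ℕ, ∫ t, F k t ∂μ = 1/(4*(k:ℝ)+1)^2 - 1/(4*(k:ℝ)+3)^2 := by
    intro k
    have h1 : ∫ t, F k t ∂μ = ∫ t in (0:ℝ)..1, F k t := by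
      rw [integral_of_le (by norm_num)]
    rw [h1, hF]
    rw [integral_sub (intervalIntegrable_pow_neg_log (4*k))
        (intervalIntegrable_pow_neg_log (4*k+2)),
      integral_pow_neg_log, integral_pow_neg_log]
    push_cast; ring_nf
  have hnonneg : ∀ k : ℕ, ∀ t ∈ Ioc (0:ℝ) 1, 0 ≤ F k t := by
    intro k t ht
    have h1 : Real.log t ≤ 0 := Real.log_nonpos ht.1.le ht.2
    have h2 : t^(4*k+2) ≤ t^(4*k) := pow_le_pow_of_le_one ht.1.le ht.2 (by omega)
    have h3 : t^(4*k+2) * (-Real.log t) ≤ t^(4*k) * (-Real.log t) :=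
      mul_le_mul_of_nonneg_right h2 (by linarith)
    simp only [hF]
    linarith
  have hnorm : ∀ k : ℕ, ∫ t, ‖F k t‖ ∂μ = 1/(4*(k:ℝ)+1)^2 - 1/(4*(k:ℝ)+3)^2 := by
    intro k
    rw [← hval k]
    apply setIntegral_congr_fun measurableSet_Ioc
    intro t ht
    exact Real.norm_of_nonneg (hnonneg k t ht)
  have hsum : Summable (fun k : ℕ => ∫ t, ‖F k t‖ ∂μ) := by
    have ha : Summable (fun k : ℕ => 1/(4*(k:ℝ)+1)^2) := by
      simpa using summable_aux 4 0 (by norm_num) le_rfl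
    have hb : Summable (fun k : ℕ => 1/(4*(k:ℝ)+3)^2) := by
      simpa [show (1:ℝ)+2 = 3 by norm_num] using summable_aux 4 2 (by norm_num) (by norm_num)
    exact ((ha.sub hb).congr (fun k => (hnorm k).symm))
  have key := MeasureTheory.integral_tsum_of_summable_integral_norm hint hsum
  have hpt : ∀ t ∈ Ioc (0:ℝ) 1, (∑' k, F k t) = (-Real.log t)/(1+t^2) := by
    intro t ht
    rcases eq_or_lt_of_le ht.2 with h1 | h1
    · have hz : ∀ k, F k t = 0 := by
        intro k; simp only [hF]; rw [h1]; simp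
      rw [tsum_congr hz, tsum_zero, h1]
      simp
    · have hgeo : HasSum (fun k : ℕ => (t^4)^k) (1-t^4)⁻¹ :=
        hasSum_geometric_of_lt_one (by positivity) (pow_lt_one₀ ht.1.le h1 (by norm_num))
      have hc := hgeo.mul_right ((1 - t^2) * (-Real.log t))
      have heq : (fun k : ℕ => (t^4)^k * ((1 - t^2) * (-Real.log t))) = fun k => F k t := by
        funext k
        simp only [hF]
        rw [← pow_mul]
        ring_nf
      rw [heq] at hc
      rw [hc.tsum_eq]
      have h4' : t^4 < 1 := pow_lt_one₀ ht.1.le h1 (by norm_num)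
      have h4 : 1 - t^4 ≠ 0 := by intro h; rw [sub_eq_zero] at h; linarith
      have h5 : 1 + t^2 ≠ 0 := by positivity
      field_simp
      ring
  have hL : ∫ t in (0:ℝ)..1, (-Real.log t)/(1+t^2) = ∫ t, (∑' k, F k t) ∂μ := by
    rw [integral_of_le (by norm_num)]
    exact (setIntegral_congr_fun measurableSet_Ioc hpt).symm
  rw [hL, ← key, catalan_eq]
  exact tsum_congr fun k => (hval k)

lemma il_log01 : IntervalIntegrable Real.log volume 0 1 := by
  have h := (intervalIntegrable_pow_neg_log 0).neg
  have he : (-fun t : ℝ => t^0 * -Real.log t) = Real.log := by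
    funext t; simp
  rwa [he] at h

lemma il_log0c : IntervalIntegrable Real.log volume 0 (π/2) := by
  refine il_log01.trans ?_
  refine intervalIntegrable_log (Set.notMem_uIcc_of_lt one_pos (by positivity))

lemma il_logsin : IntervalIntegrable (fun x => Real.log (sin x)) volume 0 (π/2) := by
  rw [intervalIntegrable_iff, uIoc_of_le (by positivity : (0:ℝ) ≤ π/2)]
  have hg : IntervalIntegrable (fun x => Real.log (π/2) - Real.log x) volume 0 (π/2) :=
    (intervalIntegrable_const (c := Real.log (π/2))).sub il_log0c
  rw [intervalIntegrable_iff, uIoc_of_le (by positivity : (0:ℝ) ≤ π/2)] at hg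
  refine Integrable.mono' hg
    ((Real.measurable_log.comp Real.continuous_sin.measurable).aestronglyMeasurable) ?_
  filter_upwards [ae_restrict_mem measurableSet_Ioc] with x hx
  have hx0 : 0 < x := hx.1
  have hxp : x ≤ π/2 := hx.2
  have hsp : 0 < sin x := Real.sin_pos_of_pos_of_lt_pi hx0 (by nlinarith [pi_pos])
  have hs1 : sin x ≤ 1 := Real.sin_le_one x
  have hlow : 2/π * x ≤ sin x := Real.mul_le_sin hx0.le hxp
  have h2 : 0 < 2/π * x := by positivity
  have hle : Real.log (2/π * x) ≤ Real.log (sin x) := Real.log_le_log h2 hlow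
  have hls : Real.log (sin x) ≤ 0 := Real.log_nonpos hsp.le hs1
  rw [Real.norm_eq_abs, abs_of_nonpos hls]
  have he : Real.log (2/π * x) = Real.log x - Real.log (π/2) := by
    rw [show 2/π * x = x / (π/2) by field_simp]
    exact Real.log_div hx0.ne' (by positivity)
  linarith

lemma il_logsin' : IntervalIntegrable (fun x => Real.log (sin x)) volume (π/2) π := by
  have h := il_logsin.comp_sub_left π
  have he : (fun x => Real.log (sin (π - x))) = fun x => Real.log (sin x) := by
    funext x; rw [Real.sin_pi_sub]
  rw [he] at h
  have e1 : π - 0 = π := by ring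
  have e2 : π - π/2 = π/2 := by ring
  rw [e1, e2] at h
  exact h.symm

lemma il_logsin_pi : IntervalIntegrable (fun x => Real.log (sin x)) volume 0 π :=
  il_logsin.trans il_logsin'

lemma il_logcos : IntervalIntegrable (fun x => Real.log (cos x)) volume 0 (π/2) := by
  have h := il_logsin.comp_sub_left (π/2)
  have he : (fun x => Real.log (sin (π/2 - x))) = fun x => Real.log (cos x) := by
    funext x; rw [Real.sin_pi_div_two_sub]
  rw [he] at h
  have e2 : π/2 - π/2 = 0 := by ring
  have e1 : π/2 - 0 = π/2 := by ring
  exact (e2 ▸ e1 ▸ h).symm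

lemma il_logsin_q : IntervalIntegrable (fun x => Real.log (sin x)) volume 0 (π/4) := by
  refine il_logsin.mono_set ?_
  rw [Set.uIcc_of_le (by positivity), Set.uIcc_of_le (by positivity)]
  exact Set.Icc_subset_Icc le_rfl (by linarith [pi_pos])

lemma il_logcos_q : IntervalIntegrable (fun x => Real.log (cos x)) volume 0 (π/4) := by
  refine il_logcos.mono_set ?_
  rw [Set.uIcc_of_le (by positivity), Set.uIcc_of_le (by positivity)]
  exact Set.Icc_subset_Icc le_rfl (by linarith [pi_pos])

lemma refl_cos : (∫ x in (0:ℝ)..(π/2), Real.log (cos x))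
    = ∫ x in (0:ℝ)..(π/2), Real.log (sin x) := by
  have h := integral_comp_sub_left (a := (0:ℝ)) (b := π/2)
    (fun x => Real.log (sin x)) (π/2)
  simp_rw [Real.sin_pi_div_two_sub] at h
  rw [h]
  norm_num

lemma half_pi_refl : (∫ x in (π/2:ℝ)..π, Real.log (sin x))
    = ∫ x in (0:ℝ)..(π/2), Real.log (sin x) := by
  have h := integral_comp_sub_left (a := (0:ℝ)) (b := π/2)
    (fun x => Real.log (sin x)) π
  simp_rw [Real.sin_pi_sub] at h
  rw [show π - π/2 = π/2 by ring, show π - 0 = π by ring] at h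
  exact h.symm

lemma double_eq : (∫ x in (0:ℝ)..π, Real.log (sin x))
    = 2 * ∫ x in (0:ℝ)..(π/2), Real.log (sin x) := by
  rw [← integral_add_adjacent_intervals il_logsin il_logsin', half_pi_refl]
  ring

lemma L_eq : (∫ x in (0:ℝ)..(π/2), Real.log (sin x)) = -(π/2 * Real.log 2) := by
  set L := ∫ x in (0:ℝ)..(π/2), Real.log (sin x) with hL
  have hsplit : (∫ x in (0:ℝ)..(π/2), Real.log (sin x * cos x)) = L + L := by
    have he : Set.EqOn (fun x => Real.log (sin x * cos x))
        (fun x => Real.log (sin x) + Real.log (cos x)) (Set.uIcc 0 (π/2)) := by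
      intro x hx
      rw [Set.uIcc_of_le (by positivity)] at hx
      rcases eq_or_lt_of_le hx.1 with h0 | h0
      · simp [← h0]
      rcases eq_or_lt_of_le hx.2 with h1 | h1
      · simp [h1]
      have hs : sin x ≠ 0 := (Real.sin_pos_of_pos_of_lt_pi h0 (by nlinarith [pi_pos])).ne'
      have hc : cos x ≠ 0 := (Real.cos_pos_of_mem_Ioo ⟨by linarith [pi_pos], h1⟩).ne'
      simp only
      rw [Real.log_mul hs hc]
    rw [integral_congr he, integral_add il_logsin il_logcos, refl_cos]
  have hdup : (∫ x in (0:ℝ)..(π/2), Real.log (sin x * cos x)) = L - π/2 * Real.log 2 := by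
    have hae : ∀ᵐ x : ℝ ∂volume, x ≠ π/2 := by
      refine ae_iff.2 ?_
      simp only [ne_eq, not_not]
      simpa using measure_singleton (π/2 : ℝ)
    have he2 : ∀ᵐ x : ℝ ∂volume, x ∈ Set.uIoc 0 (π/2) →
        Real.log (sin x * cos x) = Real.log (sin (2*x)) - Real.log 2 := by
      filter_upwards [hae] with x hne hx
      rw [Set.uIoc_of_le (by positivity)] at hx
      have h0 : 0 < x := hx.1
      have h1 : x < π/2 := lt_of_le_of_ne hx.2 hne
      have hs2 : sin (2*x) ≠ 0 :=
        (Real.sin_pos_of_pos_of_lt_pi (by linarith) (by linarith)).ne'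
      rw [Real.sin_two_mul] at hs2 ⊢
      rw [show (2:ℝ) * sin x * cos x = 2 * (sin x * cos x) by ring] at hs2 ⊢
      have hsc : sin x * cos x ≠ 0 := by
        intro h; rw [h] at hs2; simp at hs2
      rw [Real.log_mul (by norm_num) hsc]
      ring
    rw [integral_congr_ae he2]
    have hil2 : IntervalIntegrable (fun x => Real.log (sin (2*x))) volume 0 (π/2) := by
      have h := il_logsin_pi.comp_mul_left (c := 2)
      norm_num at h
      exact h
    rw [integral_sub hil2 intervalIntegrable_const]
    have h2 : (∫ x in (0:ℝ)..(π/2), Real.log (sin (2*x))) = L := by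
      have h := integral_comp_mul_left (a := (0:ℝ)) (b := π/2)
        (fun x => Real.log (sin x)) (c := 2) (by norm_num)
      rw [h, smul_eq_mul]
      norm_num
      rw [show 2 * (π/2) = π by ring, double_eq, hL]
      ring
    rw [h2]
    simp
  have := hsplit.symm.trans hdup
  linarith

lemma AB_eq : (∫ x in (0:ℝ)..(π/4), Real.log (sin x)) + (∫ x in (0:ℝ)..(π/4), Real.log (cos x))
    = -(π/2 * Real.log 2) := by
  have pi_pos := Real.pi_pos
  have hsplit : (∫ x in (0:ℝ)..(π/4), Real.log (sin x * cos x))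
      = (∫ x in (0:ℝ)..(π/4), Real.log (sin x)) + ∫ x in (0:ℝ)..(π/4), Real.log (cos x) := by
    have he : Set.EqOn (fun x => Real.log (sin x * cos x))
        (fun x => Real.log (sin x) + Real.log (cos x)) (Set.uIcc 0 (π/4)) := by
      intro x hx
      rw [Set.uIcc_of_le (by positivity)] at hx
      rcases eq_or_lt_of_le hx.1 with h0 | h0
      · simp [← h0]
      have hs : sin x ≠ 0 := (Real.sin_pos_of_pos_of_lt_pi h0 (by nlinarith [hx.2])).ne'
      have hc : cos x ≠ 0 := (Real.cos_pos_of_mem_Ioo ⟨by linarith, by nlinarith [hx.2]⟩).ne'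
      simp only
      rw [Real.log_mul hs hc]
    rw [integral_congr he, integral_add il_logsin_q il_logcos_q]
  have hdup : (∫ x in (0:ℝ)..(π/4), Real.log (sin x * cos x))
      = -(π/4 * Real.log 2) - π/4 * Real.log 2 := by
    have he2 : ∀ᵐ x : ℝ ∂volume, x ∈ Set.uIoc 0 (π/4) →
        Real.log (sin x * cos x) = Real.log (sin (2*x)) - Real.log 2 := by
      filter_upwards with x hx
      rw [Set.uIoc_of_le (by positivity)] at hx
      have h0 : 0 < x := hx.1
      have h1 : x ≤ π/4 := hx.2
      have hs2 : sin (2*x) ≠ 0 :=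
        (Real.sin_pos_of_pos_of_lt_pi (by linarith) (by nlinarith)).ne'
      rw [Real.sin_two_mul] at hs2 ⊢
      rw [show (2:ℝ) * sin x * cos x = 2 * (sin x * cos x) by ring] at hs2 ⊢
      have hsc : sin x * cos x ≠ 0 := by
        intro h; rw [h] at hs2; simp at hs2
      rw [Real.log_mul (by norm_num) hsc]
      ring
    rw [integral_congr_ae he2]
    have hil2 : IntervalIntegrable (fun x => Real.log (sin (2*x))) volume 0 (π/4) := by
      have h := il_logsin.comp_mul_left (c := 2)
      norm_num at h
      rwa [show π/2/2 = π/4 by ring] at h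
    rw [integral_sub hil2 intervalIntegrable_const]
    have h2 : (∫ x in (0:ℝ)..(π/4), Real.log (sin (2*x))) = -(π/4 * Real.log 2) := by
      have h := integral_comp_mul_left (a := (0:ℝ)) (b := π/4)
        (fun x => Real.log (sin x)) (c := 2) (by norm_num)
      rw [h, smul_eq_mul]
      norm_num
      rw [show 2 * (π/4) = π/2 by ring, L_eq]
      ring
    rw [h2]
    simp
  rw [← hsplit, hdup]
  ring

lemma BA_eq : (∫ x in (0:ℝ)..(π/4), Real.log (sin x)) - (∫ x in (0:ℝ)..(π/4), Real.log (cos x))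
    = -catalanConst := by
  have pi_pos := Real.pi_pos
  have h4 : (0:ℝ) ≤ π/4 := by positivity
  have hcospos : ∀ x ∈ Set.Icc (0:ℝ) (π/4), 0 < cos x := by
    intro x hx
    exact Real.cos_pos_of_mem_Ioo ⟨by linarith [hx.1], by nlinarith [hx.2]⟩
  set g : ℝ → ℝ := fun t => Real.log t / (1 + t^2) with hg
  have hgm : Measurable g :=
    Real.measurable_log.div ((measurable_id.pow_const 2).const_add 1)
  have hgIcc : IntegrableOn g (Set.Icc (0:ℝ) 1) volume := by
    have h0 := intervalIntegrable_pow_neg_log 0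
    rw [intervalIntegrable_iff, uIoc_of_le (by norm_num : (0:ℝ) ≤ 1)] at h0
    rw [integrableOn_Icc_iff_integrableOn_Ioc]
    refine Integrable.mono' h0 hgm.aestronglyMeasurable ?_
    filter_upwards [ae_restrict_mem measurableSet_Ioc] with t ht
    have h1 : Real.log t ≤ 0 := Real.log_nonpos ht.1.le ht.2
    have h2 : (1:ℝ) ≤ 1 + t^2 := by nlinarith
    rw [hg, Real.norm_eq_abs, abs_div, abs_of_nonpos h1, abs_of_nonneg (by linarith)]
    calc -Real.log t / (1+t^2) ≤ -Real.log t / 1 :=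
          div_le_div_of_nonneg_left (by linarith) (by norm_num) h2
      _ = 1 * -Real.log t := by ring
  have himage : Real.tan '' (Set.uIcc 0 (π/4)) ⊆ Set.Icc (0:ℝ) 1 := by
    rw [Set.uIcc_of_le h4]
    rintro - ⟨x, hx, rfl⟩
    constructor
    · exact Real.tan_nonneg_of_nonneg_of_le_pi_div_two hx.1 (by linarith [hx.2])
    · have := Real.strictMonoOn_tan.monotoneOn
        (a := x) (b := π/4) ⟨by linarith [hx.1], by nlinarith [hx.2]⟩
        ⟨by linarith, by linarith⟩ hx.2
      rwa [Real.tan_pi_div_four] at this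
  have hEq : Set.EqOn (fun x => (1/cos x^2) • ((g ∘ Real.tan) x))
      (fun x => Real.log (sin x) - Real.log (cos x)) (Set.Icc (0:ℝ) (π/4)) := by
    intro x hx
    have hc := hcospos x hx
    have hsec : 1 + Real.tan x^2 = 1/cos x^2 := by
      have hpyth := Real.sin_sq_add_cos_sq x
      rw [Real.tan_eq_sin_div_cos]
      field_simp
      linarith
    simp only [Function.comp, hg, smul_eq_mul]
    rw [hsec]
    rcases eq_or_lt_of_le hx.1 with h0 | h0
    · simp [← h0, Real.tan_zero]
    have hs : (0:ℝ) < sin x := Real.sin_pos_of_pos_of_lt_pi h0 (by nlinarith [hx.2])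
    rw [Real.tan_eq_sin_div_cos, Real.log_div hs.ne' hc.ne']
    have hcc : 1/cos x^2 ≠ 0 := by positivity
    field_simp
  have key := integral_comp_smul_deriv''' (a := 0) (b := π/4)
    (f := Real.tan) (f' := fun x => 1/cos x^2) (g := g)
    (by -- ContinuousOn tan [[0, π/4]]
      refine Real.continuousOn_tan.mono ?_
      rw [Set.uIcc_of_le h4]
      intro x hx
      exact (hcospos x hx).ne')
    (by -- HasDerivWithinAt on Ioo
      intro x hx
      rw [min_eq_left h4, max_eq_right h4] at hx
      exact (Real.hasDerivAt_tan (hcospos x (Set.mem_Icc_of_Ioo hx)).ne').hasDerivWithinAt)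
    (by -- g continuous on tan '' Ioo
      refine ContinuousOn.mono (s := Set.Ioi (0:ℝ)) ?_ ?_
      · apply ContinuousOn.div
        · exact Real.continuousOn_log.mono (fun t ht => ne_of_gt ht)
        · fun_prop
        · intro t ht; positivity
      · rw [min_eq_left h4, max_eq_right h4]
        rintro - ⟨x, hx, rfl⟩
        exact Real.tan_pos_of_pos_of_lt_pi_div_two hx.1 (by nlinarith [hx.2]))
    (hgIcc.mono_set himage)
    (by -- integrable pullback
      rw [Set.uIcc_of_le h4]
      refine IntegrableOn.congr_fun ?_ hEq.symm measurableSet_Icc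
      have h := il_logsin_q.sub il_logcos_q
      rwa [intervalIntegrable_iff', Set.uIcc_of_le h4] at h)
  rw [Real.tan_zero, Real.tan_pi_div_four] at key
  have hL : (∫ x in (0:ℝ)..(π/4), (1/cos x^2) • ((g ∘ Real.tan) x))
      = (∫ x in (0:ℝ)..(π/4), Real.log (sin x)) - ∫ x in (0:ℝ)..(π/4), Real.log (cos x) := by
    rw [integral_congr (g := fun x => Real.log (sin x) - Real.log (cos x))
      (by rwa [Set.uIcc_of_le h4]),
      integral_sub il_logsin_q il_logcos_q]
  have hR : (∫ t in (0:ℝ)..1, g t) = -catalanConst := by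
    rw [← K_eq, ← intervalIntegral.integral_neg]
    refine integral_congr fun t _ => ?_
    simp only [hg, neg_div, neg_neg]
  rw [hL, hR] at key
  exact key

theorem stmt8 :
    (∫ x in (0:ℝ)..(π/4), x * tan x) =
      (π / 8) * Real.log 2 - (π / 4) * Real.log 2 + catalanConst / 2 := by
  have pi_pos := Real.pi_pos
  have h4 : (0:ℝ) ≤ π/4 := by positivity
  have hcospos : ∀ x ∈ Set.Icc (0:ℝ) (π/4), 0 < cos x := by
    intro x hx
    exact Real.cos_pos_of_mem_Ioo ⟨by linarith [hx.1], by nlinarith [hx.2]⟩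
  have hv : ∀ x ∈ Set.uIcc (0:ℝ) (π/4),
      HasDerivAt (fun x => -Real.log (cos x)) (Real.tan x) x := by
    intro x hx
    rw [Set.uIcc_of_le h4] at hx
    have hc := hcospos x hx
    have hcos : HasDerivAt cos (-sin x) x := Real.hasDerivAt_cos x
    have hlog := (Real.hasDerivAt_log hc.ne').comp x hcos
    have hneg : HasDerivAt (fun x => -Real.log (cos x)) (-((cos x)⁻¹ * -sin x)) x := hlog.neg
    convert hneg using 1
    rw [Real.tan_eq_sin_div_cos]
    field_simp
  have hu : ∀ x ∈ Set.uIcc (0:ℝ) (π/4), HasDerivAt (fun x : ℝ => x) (1:ℝ) x :=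
    fun x _ => hasDerivAt_id x
  have hv' : IntervalIntegrable Real.tan volume 0 (π/4) := by
    refine (Real.continuousOn_tan.mono ?_).intervalIntegrable
    rw [Set.uIcc_of_le h4]
    exact fun x hx => (hcospos x hx).ne'
  have hibp := intervalIntegral.integral_mul_deriv_eq_deriv_mul hu hv
    (intervalIntegrable_const (c := (1:ℝ))) hv'
  have e1 : (∫ x in (0:ℝ)..(π/4), (1:ℝ) * -Real.log (cos x))
      = -∫ x in (0:ℝ)..(π/4), Real.log (cos x) := by
    rw [← intervalIntegral.integral_neg]
    exact integral_congr fun x _ => by ring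
  have hB : (∫ x in (0:ℝ)..(π/4), Real.log (cos x))
      = catalanConst/2 - π/4 * Real.log 2 := by
    have h1 := AB_eq
    have h2 := BA_eq
    linarith
  have hclog : Real.log (cos (π/4)) = -(Real.log 2/2) := by
    rw [Real.cos_pi_div_four, Real.log_div (by positivity) (by norm_num),
      Real.log_sqrt (by norm_num)]
    ring
  rw [hibp, e1, hB, hclog]
  ring
end
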